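/- Let μ > 0 and let N ≥ 2 be an even integer, so that T_N(μ) is invertible. Then for every n = 1, …, N/2, the 2×2 submatrix of T_N(μ)⁻¹ on rows and columns {N−2n+1, N−2n+2} equals Ĩ = (1/D)·[[d_{N−2n+2} + μ² a_{n−1}, μ],[−μ, d_{N−2n+1} + μ² b_{(N−2n)/2}]], where D = (d_{N−2n+2} + μ² a_{n−1})(d_{N−2n+1} + μ² b_{(N−2n)/2}) + μ². -/

import Mathlib

/-- The `N × N` tridiagonal matrix `T_N(μ)` with diagonal `2, 4, …, 2N`, subdiagonal `μ`
and superdiagonal `-μ` (0-based indexing). -/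
noncomputable def Tmat (N : ℕ) (μ : ℝ) : Matrix (Fin N) (Fin N) ℝ :=
  Matrix.of fun i j =>
    if (i : ℕ) = (j : ℕ) then 2 * (((i : ℕ) : ℝ) + 1)
    else if (i : ℕ) = (j : ℕ) + 1 then μ
    else if (j : ℕ) = (i : ℕ) + 1 then -μ
    else 0

/-- The recursive sequence `a_j` (with `d_i = 2i`):
`a_j = (d_{N−2j+2} + a_{j−1}μ²)/(d_{N−2j+1}d_{N−2j+2} + a_{j−1}d_{N−2j+1}μ² + μ²)`, `a_0 = 0`. -/
noncomputable def aSeq (μ : ℝ) (N : ℕ) : ℕ → ℝ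
  | 0 => 0
  | j + 1 =>
      (2 * ((N : ℝ) - 2 * ((j : ℝ) + 1) + 2) + aSeq μ N j * μ ^ 2) /
        (2 * ((N : ℝ) - 2 * ((j : ℝ) + 1) + 1) * (2 * ((N : ℝ) - 2 * ((j : ℝ) + 1) + 2)) +
          aSeq μ N j * (2 * ((N : ℝ) - 2 * ((j : ℝ) + 1) + 1)) * μ ^ 2 + μ ^ 2)

/-- The recursive sequence `â_j`:
`â_j = μ/(d_{N−2j+1}d_{N−2j+2} + a_{j−1}d_{N−2j+1}μ² + μ²)`, `â_0 = 0`. -/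
noncomputable def ahatSeq (μ : ℝ) (N : ℕ) : ℕ → ℝ
  | 0 => 0
  | j + 1 =>
      μ / (2 * ((N : ℝ) - 2 * ((j : ℝ) + 1) + 1) * (2 * ((N : ℝ) - 2 * ((j : ℝ) + 1) + 2)) +
          aSeq μ N j * (2 * ((N : ℝ) - 2 * ((j : ℝ) + 1) + 1)) * μ ^ 2 + μ ^ 2)

/-- The recursive sequence `b_j`:
`b_j = (d_{2j−1} + b_{j−1}μ²)/(d_{2j}d_{2j−1} + b_{j−1}d_{2j}μ² + μ²)`, `b_0 = 0`. -/
noncomputable def bSeq (μ : ℝ) : ℕ → ℝ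
  | 0 => 0
  | j + 1 =>
      (2 * (2 * ((j : ℝ) + 1) - 1) + bSeq μ j * μ ^ 2) /
        (2 * (2 * ((j : ℝ) + 1)) * (2 * (2 * ((j : ℝ) + 1) - 1)) +
          bSeq μ j * (2 * (2 * ((j : ℝ) + 1))) * μ ^ 2 + μ ^ 2)

/-- The determinant `D = (d_{N−2n+2} + μ² a_{n−1})(d_{N−2n+1} + μ² b_{(N−2n)/2}) + μ²`. -/
noncomputable def Dden (μ : ℝ) (N n : ℕ) : ℝ :=
  (2 * (((N - 2 * n : ℕ) : ℝ) + 2) + μ ^ 2 * aSeq μ N (n - 1)) *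
      (2 * (((N - 2 * n : ℕ) : ℝ) + 1) + μ ^ 2 * bSeq μ ((N - 2 * n) / 2)) + μ ^ 2

/-- The `2 × 2` matrix `Ĩ = (1/D)·[[d_{N−2n+2} + μ² a_{n−1}, μ], [−μ, d_{N−2n+1} + μ² b_{(N−2n)/2}]]`. -/
noncomputable def Itil (μ : ℝ) (N n : ℕ) : Matrix (Fin 2) (Fin 2) ℝ :=
  !![(2 * (((N - 2 * n : ℕ) : ℝ) + 2) + μ ^ 2 * aSeq μ N (n - 1)) / Dden μ N n,
      μ / Dden μ N n;
     -μ / Dden μ N n,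
      (2 * (((N - 2 * n : ℕ) : ℝ) + 1) + μ ^ 2 * bSeq μ ((N - 2 * n) / 2)) / Dden μ N n]


open Matrix Finset

noncomputable def rho (μ : ℝ) : ℕ → ℝ
  | 0 => μ / 2
  | k + 1 => μ / (2 * ((k : ℝ) + 2) + μ * rho μ k)

noncomputable def sig (μ : ℝ) (N : ℕ) : ℕ → ℝ
  | 0 => μ / (2 * (N : ℝ))
  | k + 1 => μ / (2 * ((N : ℝ) - (k : ℝ) - 1) + μ * sig μ N k)


lemma rho_pos {μ : ℝ} (hμ : 0 < μ) : ∀ k, 0 < rho μ k := by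
  intro k
  induction k with
  | zero => rw [rho]; positivity
  | succ k ih =>
      rw [rho]
      have hden : 0 < 2 * ((k : ℝ) + 2) + μ * rho μ k := by positivity
      positivity

lemma rho_odd {μ : ℝ} (hμ : 0 < μ) : ∀ j, rho μ (2 * j + 1) = μ * bSeq μ (j + 1) := by
  intro j
  induction j with
  | zero =>
      rw [show 2 * 0 + 1 = 0 + 1 from rfl, rho, rho, bSeq, bSeq]
      have h1 : (4 : ℝ) + μ * (μ / 2) ≠ 0 := by positivity
      have h2 : (8:ℝ) + μ ^ 2 ≠ 0 := by positivity
      norm_num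
      field_simp
      ring
  | succ j ih =>
      have hj : (0:ℝ) ≤ (j:ℝ) := Nat.cast_nonneg j
      have hb : 0 ≤ bSeq μ (j + 1) := by
        have := rho_pos hμ (2 * j + 1)
        rw [ih] at this
        nlinarith
      set b := bSeq μ (j + 1) with hbdef
      have hd2pos : (0:ℝ) < 2 * (2*(j:ℝ)+3) + μ^2 * b := by nlinarith
      have hr2 : rho μ (2*j+2) = μ / (2 * (2*(j:ℝ)+3) + μ^2 * b) := by
        rw [show 2*j+2 = (2*j+1)+1 from rfl, rho, ih]
        push_cast
        ring_nf
      have hr2pos : 0 < rho μ (2*j+2) := rho_pos hμ _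
      have hr2mul : rho μ (2*j+2) * (2 * (2*(j:ℝ)+3) + μ^2 * b) = μ := by
        rw [hr2]; field_simp
      have hgoal : rho μ (2*(j+1)+1) = μ / (2*(2*(j:ℝ)+4) + μ * rho μ (2*j+2)) := by
        rw [show 2*(j+1)+1 = (2*j+2)+1 from rfl, rho]
        push_cast
        ring_nf
      rw [hgoal, show bSeq μ (j+1+1) = (2 * (2 * (((j+1) : ℕ) + 1 : ℝ) - 1) + bSeq μ (j+1) * μ ^ 2) /
        (2 * (2 * (((j+1) : ℕ) + 1 : ℝ)) * (2 * (2 * (((j+1) : ℕ) + 1 : ℝ) - 1)) +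
          bSeq μ (j+1) * (2 * (2 * (((j+1) : ℕ) + 1 : ℝ))) * μ ^ 2 + μ ^ 2) from by rw [bSeq]]
      push_cast
      rw [← hbdef, ← mul_div_assoc]
      have hdenA : (0:ℝ) < 2*(2*(j:ℝ)+4) + μ * rho μ (2*j+2) := by nlinarith
      have hdenB : (0:ℝ) < 2 * (2 * ((j:ℝ) + 1 + 1)) * (2 * (2 * ((j:ℝ) + 1 + 1)) - 1*2) +
          b * (2 * (2 * ((j:ℝ) + 1 + 1))) * μ ^ 2 + μ ^ 2 := by nlinarith
      rw [div_eq_div_iff (by nlinarith) (by nlinarith)]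
      linear_combination (-μ^2) * hr2mul


lemma sig_pos {μ : ℝ} (hμ : 0 < μ) {N : ℕ} (hN : 2 ≤ N) :
    ∀ k, k + 1 ≤ N → 0 < sig μ N k := by
  intro k
  induction k with
  | zero =>
      intro _
      rw [sig]
      have h0 : (0:ℝ) < (N:ℝ) := by positivity
      positivity
  | succ k ih =>
      intro hk
      have h1 : 0 < sig μ N k := ih (by omega)
      have h2 : (1:ℝ) ≤ (N:ℝ) - (k:ℝ) - 1 := by
        have : ((k:ℝ) + 2) ≤ (N:ℝ) := by exact_mod_cast hk
        linarith
      rw [sig]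
      have hden : 0 < 2 * ((N : ℝ) - (k : ℝ) - 1) + μ * sig μ N k := by nlinarith
      positivity

lemma sig_odd {μ : ℝ} (hμ : 0 < μ) {N : ℕ} (hN : 2 ≤ N) :
    ∀ j, 2 * (j + 1) ≤ N → sig μ N (2 * j + 1) = μ * aSeq μ N (j + 1) := by
  intro j
  induction j with
  | zero =>
      intro hj
      have hN2 : (2:ℝ) ≤ (N:ℝ) := by exact_mod_cast hN
      rw [show 2 * 0 + 1 = 0 + 1 from rfl, sig, sig, aSeq, aSeq]
      push_cast
      have h1 : (0:ℝ) < 2 * (N:ℝ) := by linarith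
      have h2 : (0:ℝ) < 2 * ((N:ℝ) - 0 - 1) + μ * (μ / (2 * (N:ℝ))) := by
        have : 0 < μ * (μ / (2 * (N:ℝ))) := by positivity
        linarith
      have h3 : (0:ℝ) < 2 * ((N:ℝ) - 2 * (0 + 1) + 1) * (2 * ((N:ℝ) - 2 * (0 + 1) + 2)) +
          0 * (2 * ((N:ℝ) - 2 * (0 + 1) + 1)) * μ ^ 2 + μ ^ 2 := by nlinarith
      field_simp
      ring
  | succ j ih =>
      intro hj
      have hj' : 2 * (j + 1) ≤ N := by omega
      have hNj : 2 * (j:ℝ) + 4 ≤ (N:ℝ) := by exact_mod_cast hj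
      have ha : 0 ≤ aSeq μ N (j + 1) := by
        have := sig_pos hμ hN (2 * j + 1) (by omega)
        rw [ih hj'] at this
        nlinarith
      set a := aSeq μ N (j + 1) with hadef
      have hd2pos : (0:ℝ) < 2 * ((N:ℝ) - (2*(j:ℝ)+2)) + μ^2 * a := by nlinarith
      have hr2 : sig μ N (2*j+2) = μ / (2 * ((N:ℝ) - (2*(j:ℝ)+2)) + μ^2 * a) := by
        rw [show 2*j+2 = (2*j+1)+1 from rfl, sig, ih hj']
        push_cast
        ring_nf
      have hr2pos : 0 < sig μ N (2*j+2) := sig_pos hμ hN _ (by omega)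
      have hr2mul : sig μ N (2*j+2) * (2 * ((N:ℝ) - (2*(j:ℝ)+2)) + μ^2 * a) = μ := by
        rw [hr2]; field_simp
        exact div_self (ne_of_gt (by linarith))
      have hgoal : sig μ N (2*(j+1)+1) = μ / (2*((N:ℝ) - (2*(j:ℝ)+3)) + μ * sig μ N (2*j+2)) := by
        rw [show 2*(j+1)+1 = (2*j+2)+1 from rfl, sig]
        push_cast
        ring_nf
      rw [hgoal, show aSeq μ N (j+1+1) = (2 * ((N : ℝ) - 2 * (((j+1) : ℕ) + 1 : ℝ) + 2) + aSeq μ N (j+1) * μ ^ 2) /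
        (2 * ((N : ℝ) - 2 * (((j+1) : ℕ) + 1 : ℝ) + 1) * (2 * ((N : ℝ) - 2 * (((j+1) : ℕ) + 1 : ℝ) + 2)) +
          aSeq μ N (j+1) * (2 * ((N : ℝ) - 2 * (((j+1) : ℕ) + 1 : ℝ) + 1)) * μ ^ 2 + μ ^ 2) from by rw [aSeq]]
      push_cast
      rw [← hadef, ← mul_div_assoc]
      have hA : (0:ℝ) < 2*((N:ℝ) - (2*(j:ℝ)+3)) + μ * sig μ N (2*j+2) := by nlinarith
      have hB : (0:ℝ) < 2 * ((N:ℝ) - 2 * ((j:ℝ) + 1 + 1) + 1) * (2 * ((N:ℝ) - 2 * ((j:ℝ) + 1 + 1) + 2)) +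
          a * (2 * ((N:ℝ) - 2 * ((j:ℝ) + 1 + 1) + 1)) * μ ^ 2 + μ ^ 2 := by nlinarith
      rw [div_eq_div_iff (by nlinarith) (by nlinarith)]
      linear_combination (-μ^2) * hr2mul



lemma bSeq_nonneg {μ : ℝ} (hμ : 0 < μ) : ∀ j, 0 ≤ bSeq μ j := by
  intro j
  cases j with
  | zero => rw [show bSeq μ 0 = 0 from rfl]
  | succ j =>
      have h := rho_odd hμ j
      have hp := rho_pos hμ (2 * j + 1)
      rw [h] at hp
      nlinarith

lemma aSeq_nonneg {μ : ℝ} (hμ : 0 < μ) {N : ℕ} (hN : 2 ≤ N) :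
    ∀ j, 2 * j ≤ N → 0 ≤ aSeq μ N j := by
  intro j hj
  cases j with
  | zero => rw [show aSeq μ N 0 = 0 from rfl]
  | succ j =>
      have h := sig_odd hμ hN j hj
      have hp := sig_pos hμ hN (2 * j + 1) (by omega)
      rw [h] at hp
      nlinarith

noncomputable def Xv (μ : ℝ) (N p : ℕ) (v0 v1 : ℝ) : ℕ → ℝ := fun k =>
  if k ≤ p then (∏ t ∈ Finset.Ico k p, rho μ t) * v0
  else if k = p + 1 then v1
  else if k < N then (∏ t ∈ Finset.Icc (p+2) k, -sig μ N (N-1-t)) * v1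
  else 0

section XvLemmas
variable (μ : ℝ) (N p : ℕ) (v0 v1 : ℝ)

lemma Xv_top {k : ℕ} (hk : k ≤ p) :
    Xv μ N p v0 v1 k = (∏ t ∈ Finset.Ico k p, rho μ t) * v0 := if_pos hk

lemma Xv_p : Xv μ N p v0 v1 p = v0 := by
  rw [Xv_top μ N p v0 v1 le_rfl, Finset.Ico_self, Finset.prod_empty, one_mul]

lemma Xv_p1 : Xv μ N p v0 v1 (p+1) = v1 := by
  unfold Xv
  rw [if_neg (by omega), if_pos rfl]

lemma Xv_ge {k : ℕ} (hpN : p + 2 ≤ N) (hk : N ≤ k) : Xv μ N p v0 v1 k = 0 := by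
  unfold Xv
  rw [if_neg (by omega), if_neg (by omega), if_neg (by omega)]

lemma Xv_step_top {k : ℕ} (hk : k < p) :
    Xv μ N p v0 v1 k = rho μ k * Xv μ N p v0 v1 (k+1) := by
  rw [Xv_top μ N p v0 v1 hk.le, Xv_top μ N p v0 v1 hk,
    Finset.prod_eq_prod_Ico_succ_bot hk]
  ring

lemma Xv_step_bot {k : ℕ} (hk1 : p + 2 ≤ k) (hk2 : k < N) :
    Xv μ N p v0 v1 k = (-sig μ N (N-1-k)) * Xv μ N p v0 v1 (k-1) := by
  have hXk : Xv μ N p v0 v1 k = (∏ t ∈ Finset.Icc (p+2) k, -sig μ N (N-1-t)) * v1 := by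
    unfold Xv
    rw [if_neg (by omega), if_neg (by omega), if_pos hk2]
  have hsplit : (∏ t ∈ Finset.Icc (p+2) k, -sig μ N (N-1-t))
      = (∏ t ∈ Finset.Icc (p+2) (k-1), -sig μ N (N-1-t)) * (-sig μ N (N-1-k)) := by
    have : k = (k-1) + 1 := by omega
    rw [this, Finset.prod_Icc_succ_top (by omega)]
    rw [← this]
  rcases eq_or_lt_of_le hk1 with h | h
  · have hk1' : k - 1 = p + 1 := by omega
    rw [hXk, hsplit, hk1', Xv_p1, show Finset.Icc (p+2) (p+1) = ∅ from by
      apply Finset.Icc_eq_empty; omega, Finset.prod_empty]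
    ring
  · have hXk1 : Xv μ N p v0 v1 (k-1) = (∏ t ∈ Finset.Icc (p+2) (k-1), -sig μ N (N-1-t)) * v1 := by
      unfold Xv
      rw [if_neg (by omega), if_neg (by omega), if_pos (by omega)]
    rw [hXk, hsplit, hXk1]
    ring

end XvLemmas

lemma key (μ : ℝ) (hμ : 0 < μ) (N p : ℕ) (hN : 2 ≤ N) (hp2 : p + 2 ≤ N)
    (hpe : Even p) (hNe : Even N) (v0 v1 : ℝ) (i : ℕ) (hi : i < N) :
    (if i = 0 then 0 else μ * Xv μ N p v0 v1 (i-1))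
      + 2*(((i:ℕ):ℝ)+1) * Xv μ N p v0 v1 i - μ * Xv μ N p v0 v1 (i+1)
    = if i = p then (2*((p:ℝ)+1) + μ^2 * bSeq μ (p/2)) * v0 - μ * v1
      else if i = p+1 then μ * v0 + (2*((p:ℝ)+2) + μ^2 * aSeq μ N ((N-p)/2 - 1)) * v1
      else 0 := by
  rcases lt_or_ge i p with hip | hip
  · -- top homogeneous rows
    rw [if_neg (show ¬ i = p by omega), if_neg (show ¬ i = p + 1 by omega)]
    rcases Nat.eq_zero_or_pos i with h0 | h0
    · subst h0
      rw [if_pos rfl, Xv_step_top μ N p v0 v1 hip]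
      rw [show rho μ 0 = μ / 2 from rfl]
      push_cast
      ring
    · obtain ⟨t, rfl⟩ : ∃ t, i = t + 1 := ⟨i - 1, by omega⟩
      rw [if_neg (show ¬ t + 1 = 0 by omega)]
      have hXi : Xv μ N p v0 v1 (t+1) = rho μ (t+1) * Xv μ N p v0 v1 (t+2) :=
        Xv_step_top μ N p v0 v1 hip
      have hXim : Xv μ N p v0 v1 t = rho μ t * Xv μ N p v0 v1 (t+1) :=
        Xv_step_top μ N p v0 v1 (by omega)
      have hdpos : (0:ℝ) < 2 * ((t : ℝ) + 2) + μ * rho μ t := by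
        have := rho_pos hμ t; positivity
      have hd : rho μ (t+1) * (2 * ((t : ℝ) + 2) + μ * rho μ t) = μ := by
        rw [rho]; field_simp
      rw [show t + 1 - 1 = t from rfl, hXim, hXi]
      push_cast
      linear_combination (Xv μ N p v0 v1 (t+2)) * hd
  rcases eq_or_lt_of_le hip with hip' | hip'
  · -- i = p
    have hip'' : i = p := hip'.symm
    rw [if_pos hip'', hip'', Xv_p1, Xv_p]
    rcases Nat.eq_zero_or_pos p with h0 | h0
    · rw [if_pos (by omega), h0]
      norm_num [bSeq]
    · rw [if_neg (show ¬ p = 0 by omega)]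
      obtain ⟨m, hm⟩ : ∃ m, p = 2 * m := by
        obtain ⟨b, hb⟩ := hpe; exact ⟨b, by omega⟩
      have hm1 : 1 ≤ m := by omega
      have hi1 : p - 1 = 2 * (m - 1) + 1 := by omega
      have hXim : Xv μ N p v0 v1 (p-1) = rho μ (p-1) * v0 := by
        rw [Xv_step_top μ N p v0 v1 (by omega), show p - 1 + 1 = p from by omega, Xv_p]
      rw [hXim, hi1, rho_odd hμ (m-1), show m - 1 + 1 = m from by omega,
        show p / 2 = m from by omega]
      have hc : ((p:ℕ):ℝ) = 2 * (m:ℝ) := by exact_mod_cast congrArg (Nat.cast (R := ℝ)) hm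
      rw [hc]
      ring
  rcases eq_or_lt_of_le (show p + 1 ≤ i from hip') with hip1 | hip1
  · -- i = p + 1
    have hI : i = p + 1 := hip1.symm
    subst hI
    rw [if_neg (show ¬ p + 1 = p by omega), if_pos rfl, if_neg (show ¬ p + 1 = 0 by omega),
      show p + 1 - 1 = p from rfl, Xv_p, Xv_p1]
    push_cast
    rcases eq_or_lt_of_le hp2 with hN2 | hN2
    · -- p + 2 = N : bottom part empty
      have hq : (N - p)/2 - 1 = 0 := by omega
      rw [show p + 1 + 1 = N from by omega, Xv_ge μ N p v0 v1 hp2 le_rfl, hq,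
        show aSeq μ N 0 = 0 from rfl]
      ring
    · obtain ⟨e, he⟩ : ∃ e, N - p = 2 * e := by
        obtain ⟨a, ha⟩ := hNe
        obtain ⟨b, hb⟩ := hpe
        exact ⟨a - b, by omega⟩
      have he2 : 2 ≤ e := by omega
      have hX2 : Xv μ N p v0 v1 (p+1+1) = (-sig μ N (N-1-(p+2))) * v1 := by
        rw [show p+1+1 = p+2 from rfl,
          Xv_step_bot μ N p v0 v1 le_rfl (by omega), show p+2-1 = p+1 from rfl, Xv_p1]
      have hidx : N - 1 - (p+2) = 2*(e-2) + 1 := by omega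
      have hsig : sig μ N (2*(e-2)+1) = μ * aSeq μ N (e-2+1) := sig_odd hμ hN (e-2) (by omega)
      have hq : (N-p)/2 - 1 = e - 2 + 1 := by omega
      rw [hX2, hidx, hsig, hq]
      ring
  · -- bottom homogeneous rows, i ≥ p + 2
    rw [if_neg (show ¬ i = p by omega), if_neg (show ¬ i = p + 1 by omega),
      if_neg (show ¬ i = 0 by omega)]
    have hXi : Xv μ N p v0 v1 i = (-sig μ N (N-1-i)) * Xv μ N p v0 v1 (i-1) :=
      Xv_step_bot μ N p v0 v1 (by omega) hi
    rcases eq_or_lt_of_le (show i + 1 ≤ N from hi) with hiN | hiN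
    · -- i = N - 1
      have hNi : N - 1 - i = 0 := by omega
      have hXi1 : Xv μ N p v0 v1 (i+1) = 0 := Xv_ge μ N p v0 v1 hp2 (by omega)
      rw [hXi1, hXi, hNi, show sig μ N 0 = μ / (2 * (N:ℝ)) from rfl]
      have hcast : ((i:ℕ):ℝ) = (N:ℝ) - 1 := by
        have h1 : i + 1 = N := by omega
        push_cast [← h1]; ring
      rw [hcast]
      have hN0 : (N:ℝ) ≠ 0 := by positivity
      field_simp
      ring
    · -- i ≤ N - 2
      set k := N - 2 - i with hk
      have hk1 : N - 1 - i = k + 1 := by omega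
      have hk2 : N - 1 - (i+1) = k := by omega
      have hXi1 : Xv μ N p v0 v1 (i+1) = (-sig μ N k) * Xv μ N p v0 v1 i := by
        rw [Xv_step_bot μ N p v0 v1 (by omega) (by omega), hk2,
          show i + 1 - 1 = i from rfl]
      have hcast : (N:ℝ) - (k:ℝ) - 1 = ((i:ℕ):ℝ) + 1 := by
        have h1 : k + i + 2 = N := by omega
        push_cast [← h1]; ring
      have hspos : 0 < sig μ N k := sig_pos hμ hN k (by omega)
      have hdpos : (0:ℝ) < 2 * ((N:ℝ) - (k:ℝ) - 1) + μ * sig μ N k := by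
        rw [hcast]; positivity
      have hd : sig μ N (k+1) * (2 * ((N:ℝ) - (k:ℝ) - 1) + μ * sig μ N k) = μ := by
        rw [sig]; field_simp
      rw [hcast] at hd
      rw [hXi1, hXi, hk1]
      linear_combination (-(Xv μ N p v0 v1 (i-1))) * hd


lemma tmat_mulVec (N : ℕ) (μ : ℝ) (Y : ℕ → ℝ) (hY : ∀ k, N ≤ k → Y k = 0) (i : Fin N) :
    (Tmat N μ *ᵥ (fun j : Fin N => Y (j : ℕ))) i
      = (if (i:ℕ) = 0 then 0 else μ * Y ((i:ℕ) - 1)) + 2*(((i:ℕ):ℝ)+1) * Y i - μ * Y ((i:ℕ)+1) := by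
  have hsplit : ∀ j : Fin N, Tmat N μ i j * Y (j:ℕ)
      = (if j = i then 2*(((i:ℕ):ℝ)+1) * Y (i:ℕ) else 0)
        + (if (i:ℕ) = (j:ℕ)+1 then μ * Y (j:ℕ) else 0)
        + (if (j:ℕ) = (i:ℕ)+1 then -μ * Y (j:ℕ) else 0) := by
    intro j
    simp only [Tmat, Matrix.of_apply]
    by_cases h1 : (i:ℕ) = (j:ℕ)
    · have hj : j = i := Fin.val_injective h1.symm
      subst hj
      rw [if_pos rfl, if_pos rfl, if_neg (by omega), if_neg (by omega)]
      ring
    · rw [if_neg h1, if_neg (show ¬ j = i from fun h => h1 (by rw [h]))]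
      by_cases h2 : (i:ℕ) = (j:ℕ)+1
      · rw [if_pos h2, if_pos h2, if_neg (by omega)]
        ring
      · rw [if_neg h2, if_neg h2]
        by_cases h3 : (j:ℕ) = (i:ℕ)+1
        · rw [if_pos h3, if_pos h3]; ring
        · rw [if_neg h3, if_neg h3]; ring
  have : (Tmat N μ *ᵥ (fun j : Fin N => Y (j : ℕ))) i = ∑ j : Fin N, Tmat N μ i j * Y (j:ℕ) := rfl
  rw [this, Finset.sum_congr rfl (fun j _ => hsplit j), Finset.sum_add_distrib,
    Finset.sum_add_distrib]
  have S1 : ∑ j : Fin N, (if j = i then 2*(((i:ℕ):ℝ)+1) * Y (i:ℕ) else 0)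
      = 2*(((i:ℕ):ℝ)+1) * Y (i:ℕ) := by
    rw [Finset.sum_ite_eq' Finset.univ i (fun _ => 2*(((i:ℕ):ℝ)+1) * Y (i:ℕ))]
    simp
  have S2 : ∑ j : Fin N, (if (i:ℕ) = (j:ℕ)+1 then μ * Y (j:ℕ) else 0)
      = (if (i:ℕ) = 0 then 0 else μ * Y ((i:ℕ) - 1)) := by
    by_cases h0 : (i:ℕ) = 0
    · rw [if_pos h0]
      apply Finset.sum_eq_zero
      intro j _
      rw [if_neg (by omega)]
    · rw [if_neg h0]
      have hlt : (i:ℕ) - 1 < N := by omega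
      have hcond : ∀ j : Fin N, ((i:ℕ) = (j:ℕ)+1) ↔ j = ⟨(i:ℕ)-1, hlt⟩ := by
        intro j
        constructor
        · intro h; exact Fin.ext (show (j:ℕ) = (i:ℕ) - 1 by omega)
        · intro h; subst h; show (i:ℕ) = (i:ℕ) - 1 + 1; omega
      rw [Finset.sum_congr rfl (fun j _ => by rw [if_congr (hcond j) rfl rfl]),
        Finset.sum_ite_eq' Finset.univ _ (fun j : Fin N => μ * Y (j:ℕ))]
      simp
  have S3 : ∑ j : Fin N, (if (j:ℕ) = (i:ℕ)+1 then -μ * Y (j:ℕ) else 0)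
      = -μ * Y ((i:ℕ)+1) := by
    by_cases hN : (i:ℕ)+1 < N
    · have hcond : ∀ j : Fin N, ((j:ℕ) = (i:ℕ)+1) ↔ j = ⟨(i:ℕ)+1, hN⟩ := by
        intro j
        constructor
        · intro h; exact Fin.ext (show (j:ℕ) = (i:ℕ) + 1 from h)
        · intro h; subst h; rfl
      rw [Finset.sum_congr rfl (fun j _ => by rw [if_congr (hcond j) rfl rfl]),
        Finset.sum_ite_eq' Finset.univ _ (fun j : Fin N => -μ * Y (j:ℕ))]
      simp
    · have : Y ((i:ℕ)+1) = 0 := hY _ (by omega)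
      rw [this]
      rw [Finset.sum_eq_zero (fun j _ => by rw [if_neg (by have := j.isLt; omega)])]
      ring
  rw [S1, S2, S3]
  ring


lemma tmat_sym (N : ℕ) (μ : ℝ) (i j : Fin N) : Tmat N μ i j + Tmat N μ j i
    = (if i = j then 4 * (((i:ℕ):ℝ)+1) else 0) := by
  simp only [Tmat, Matrix.of_apply]
  by_cases h1 : (i:ℕ) = (j:ℕ)
  · have hij : i = j := Fin.val_injective h1
    subst hij
    rw [if_pos rfl, if_pos rfl]
    ring
  · rw [if_neg h1, if_neg (show ¬(j:ℕ) = (i:ℕ) from fun h => h1 h.symm),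
      if_neg (show ¬ i = j from fun h => h1 (by rw [h]))]
    by_cases h2 : (i:ℕ) = (j:ℕ) + 1
    · have h3 : ¬ (j:ℕ) = (i:ℕ) + 1 := by omega
      rw [if_pos h2, if_neg h3, if_pos h2]
      ring
    · rw [if_neg h2, if_neg h2]
      by_cases h3 : (j:ℕ) = (i:ℕ) + 1
      · rw [if_pos h3, if_pos h3]; ring
      · rw [if_neg h3, if_neg h3]; ring

lemma tmat_ker (N : ℕ) (μ : ℝ) (v : Fin N → ℝ) (hv : Tmat N μ *ᵥ v = 0) : v = 0 := by
  have hQdef : v ⬝ᵥ (Tmat N μ *ᵥ v) = ∑ i, ∑ j, v i * (Tmat N μ i j * v j) := by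
    simp [dotProduct, Matrix.mulVec, Finset.mul_sum]
  have hswap : v ⬝ᵥ (Tmat N μ *ᵥ v) = ∑ i, ∑ j, v j * (Tmat N μ j i * v i) := by
    rw [hQdef, Finset.sum_comm]
  have hzero : v ⬝ᵥ (Tmat N μ *ᵥ v) = 0 := by rw [hv]; simp
  have h2Q : ∑ i : Fin N, 4 * (((i:ℕ):ℝ)+1) * v i ^ 2 = 0 := by
    have step1 : ∑ i : Fin N, ∑ j : Fin N,
        (v i * (Tmat N μ i j * v j) + v j * (Tmat N μ j i * v i))
        = ∑ i : Fin N, 4 * (((i:ℕ):ℝ)+1) * v i ^ 2 := by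
      apply Finset.sum_congr rfl
      intro i _
      have key1 : ∀ j : Fin N, v i * (Tmat N μ i j * v j) + v j * (Tmat N μ j i * v i)
          = (if j = i then 4 * (((i:ℕ):ℝ)+1) * v i ^ 2 else 0) := by
        intro j
        by_cases h : j = i
        · subst h
          rw [if_pos rfl]
          have hs := tmat_sym N μ j j
          rw [if_pos rfl] at hs
          linear_combination (v j ^ 2) * hs
        · rw [if_neg h]
          have hs := tmat_sym N μ i j
          rw [if_neg (show ¬ i = j from fun hh => h hh.symm)] at hs
          linear_combination (v i * v j) * hs
      rw [Finset.sum_congr rfl (fun j _ => key1 j),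
        Finset.sum_ite_eq' Finset.univ i (fun _ => 4 * (((i:ℕ):ℝ)+1) * v i ^ 2)]
      simp
    have hdup : (0:ℝ) = ∑ i : Fin N, ∑ j : Fin N,
        (v i * (Tmat N μ i j * v j) + v j * (Tmat N μ j i * v i)) := by
      rw [Finset.sum_congr rfl (fun (i : Fin N) _ => Finset.sum_add_distrib),
        Finset.sum_add_distrib, ← hQdef, ← hswap, hzero]
      ring
    rw [← step1, ← hdup]
  funext i
  have hterm : ∀ i : Fin N, (0:ℝ) ≤ 4 * (((i:ℕ):ℝ)+1) * v i ^ 2 := by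
    intro i; positivity
  have hterm0 := (Finset.sum_eq_zero_iff_of_nonneg (fun i _ => hterm i)).1 h2Q i
    (Finset.mem_univ i)
  have hpos : (0:ℝ) < 4 * (((i:ℕ):ℝ)+1) := by positivity
  have hsq : v i ^ 2 = 0 := by
    by_contra hne
    have h2 : 0 < v i ^ 2 := lt_of_le_of_ne (sq_nonneg _) (Ne.symm hne)
    nlinarith
  have hvi : v i = 0 := pow_eq_zero_iff (by norm_num : 2 ≠ 0) |>.1 hsq
  simpa using hvi

lemma tmat_isUnit (N : ℕ) (μ : ℝ) : IsUnit (Tmat N μ) := by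
  rw [Matrix.isUnit_iff_isUnit_det, isUnit_iff_ne_zero]
  intro hdet
  obtain ⟨v, hv, hv0⟩ := (Matrix.exists_mulVec_eq_zero_iff).2 hdet
  exact hv (tmat_ker N μ v hv0)


/-- The `2 × 2` submatrix of `T_N(μ)⁻¹` on (1-based) rows and columns
`{N−2n+1, N−2n+2}` equals `Ĩ`. -/
theorem stmt5 (μ : ℝ) (hμ : 0 < μ) (N : ℕ) (hN : 2 ≤ N) (hNe : Even N)
    (n : ℕ) (hn1 : 1 ≤ n) (hn2 : n ≤ N / 2) :
    IsUnit (Tmat N μ) ∧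
    ∀ r s : Fin 2,
      (Tmat N μ)⁻¹ ⟨N - 2 * n + (r : ℕ), by have := r.isLt; omega⟩
          ⟨N - 2 * n + (s : ℕ), by have := s.isLt; omega⟩
        = Itil μ N n r s := by
  have hunit := tmat_isUnit N μ
  refine ⟨hunit, ?_⟩
  have h2n : 2 * n ≤ N := by omega
  set p := N - 2 * n with hpdef
  have hp2 : p + 2 ≤ N := by omega
  have hpe : Even p := by
    obtain ⟨a, ha⟩ := hNe
    exact ⟨a - n, by omega⟩
  have hnp : (N - p) / 2 - 1 = n - 1 := by omega
  have ha0 : 0 ≤ aSeq μ N (n - 1) := aSeq_nonneg hμ hN (n - 1) (by omega)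
  have hb0 : 0 ≤ bSeq μ (p / 2) := bSeq_nonneg hμ (p / 2)
  set A := 2 * ((p : ℝ) + 2) + μ ^ 2 * aSeq μ N (n - 1) with hA
  set B := 2 * ((p : ℝ) + 1) + μ ^ 2 * bSeq μ (p / 2) with hB
  have hpc0 : (0:ℝ) ≤ (p:ℝ) := Nat.cast_nonneg p
  have haa : 0 ≤ μ ^ 2 * aSeq μ N (n - 1) := mul_nonneg (sq_nonneg μ) ha0
  have hbb : 0 ≤ μ ^ 2 * bSeq μ (p / 2) := mul_nonneg (sq_nonneg μ) hb0
  have hApos : 0 < A := by rw [hA]; linarith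
  have hBpos : 0 < B := by rw [hB]; linarith
  have hD : Dden μ N n = A * B + μ ^ 2 := by
    simp only [Dden, hA, hB, ← hpdef]
  have hDpos : 0 < Dden μ N n := by rw [hD]; nlinarith
  have hDne : Dden μ N n ≠ 0 := ne_of_gt hDpos
  have hdet : IsUnit (Tmat N μ).det := (Matrix.isUnit_iff_isUnit_det _).1 hunit
  have inv_entry : ∀ (v0 v1 : ℝ) (c : Fin N), ((c:ℕ) = p ∨ (c:ℕ) = p + 1) →
      (p = (c:ℕ) → B * v0 - μ * v1 = 1) → (p ≠ (c:ℕ) → B * v0 - μ * v1 = 0) →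
      (p + 1 = (c:ℕ) → μ * v0 + A * v1 = 1) → (p + 1 ≠ (c:ℕ) → μ * v0 + A * v1 = 0) →
      ∀ row : Fin N, (Tmat N μ)⁻¹ row c = Xv μ N p v0 v1 (row:ℕ) := by
    intro v0 v1 c hcpp e0a e0b e1a e1b row
    have hsolve : Tmat N μ *ᵥ (fun j : Fin N => Xv μ N p v0 v1 (j:ℕ)) = Pi.single c 1 := by
      funext i
      rw [tmat_mulVec N μ (Xv μ N p v0 v1) (fun k hk => Xv_ge μ N p v0 v1 hp2 hk) i,
        key μ hμ N p hN hp2 hpe hNe v0 v1 (i:ℕ) i.isLt, Pi.single_apply]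
      by_cases h0 : (i:ℕ) = p
      · rw [if_pos h0, ← hB]
        by_cases hc : i = c
        · rw [if_pos hc, e0a (by rw [← hc, h0])]
        · rw [if_neg hc, e0b (fun hpc => hc (Fin.ext (by omega)))]
      · rw [if_neg h0]
        by_cases h1 : (i:ℕ) = p + 1
        · rw [if_pos h1, hnp, ← hA]
          by_cases hc : i = c
          · rw [if_pos hc, e1a (by rw [← hc, h1])]
          · rw [if_neg hc, e1b (fun hpc => hc (Fin.ext (by omega)))]
        · rw [if_neg h1, if_neg (show ¬ i = c from fun hc => by
            subst hc
            rcases hcpp with h | h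
            · exact h0 h
            · exact h1 h)]
    have hXfun : (fun j : Fin N => Xv μ N p v0 v1 (j:ℕ)) = (Tmat N μ)⁻¹ *ᵥ Pi.single c 1 := by
      rw [← hsolve, Matrix.mulVec_mulVec, Matrix.nonsing_inv_mul _ hdet, Matrix.one_mulVec]
    have hfr := congrFun hXfun row
    rw [Matrix.mulVec_single_one] at hfr
    simpa [Matrix.transpose_apply] using hfr.symm
  have entry0 : ∀ (c : Fin N), (c:ℕ) = p → ∀ row : Fin N,
      (Tmat N μ)⁻¹ row c = Xv μ N p (A / Dden μ N n) (-μ / Dden μ N n) (row:ℕ) := by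
    intro c hc row
    refine inv_entry _ _ c (Or.inl hc) (fun _ => ?_) (fun h => absurd hc.symm h)
      (fun h => absurd h (by omega)) (fun _ => ?_) row
    · field_simp
      linear_combination -hD
    · ring
  have entry1 : ∀ (c : Fin N), (c:ℕ) = p + 1 → ∀ row : Fin N,
      (Tmat N μ)⁻¹ row c = Xv μ N p (μ / Dden μ N n) (B / Dden μ N n) (row:ℕ) := by
    intro c hc row
    refine inv_entry _ _ c (Or.inr hc) (fun h => absurd h (by omega)) (fun _ => ?_)
      (fun _ => ?_) (fun h => absurd hc.symm h) row
    · ring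
    · field_simp
      linear_combination -hD
  intro r s
  fin_cases r <;> fin_cases s
  · refine Eq.trans (entry0 _ rfl _) (Eq.trans (Xv_p μ N p _ _) ?_)
    simp only [Itil, Matrix.cons_val', Matrix.cons_val_zero, Matrix.empty_val',
      Matrix.cons_val_fin_one, Matrix.of_apply]
    rw [hA, hpdef]
    rfl
  · refine Eq.trans (entry1 _ rfl _) (Eq.trans (Xv_p μ N p _ _) ?_)
    simp only [Itil, Matrix.cons_val', Matrix.cons_val_zero, Matrix.cons_val_one,
      Matrix.head_cons, Matrix.empty_val', Matrix.cons_val_fin_one, Matrix.of_apply]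
    rfl
  · refine Eq.trans (entry0 _ rfl _) (Eq.trans (Xv_p1 μ N p _ _) ?_)
    simp only [Itil, Matrix.cons_val', Matrix.cons_val_zero, Matrix.cons_val_one,
      Matrix.head_cons, Matrix.empty_val', Matrix.cons_val_fin_one, Matrix.of_apply]
    rfl
  · refine Eq.trans (entry1 _ rfl _) (Eq.trans (Xv_p1 μ N p _ _) ?_)
    simp only [Itil, Matrix.cons_val', Matrix.cons_val_zero, Matrix.cons_val_one,
      Matrix.head_cons, Matrix.empty_val', Matrix.cons_val_fin_one, Matrix.of_apply]
    rw [hB, hpdef]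
    rfl
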